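/- Let X be a Banach space with SG(X) < 𝔭, where 𝔭 is the pseudo-intersection number. Then X has property (K). -/

import Mathlib

set_option linter.unusedSectionVars false
set_option maxHeartbeats 1000000


open NormedSpace Filter

/-- A set is weakly compact if it is compact in the weak topology. -/
def IsWeaklyCompact {X : Type*} [NormedAddCommGroup X] [NormedSpace ℝ X] (L : Set X) : Prop :=
  IsCompact (toWeakSpace ℝ X '' L)

/-- Weak* convergence of a sequence of functionals. -/
def WStarTendsto {X : Type*} [NormedAddCommGroup X] [NormedSpace ℝ X]
    (f : ℕ → StrongDual ℝ X) (g : StrongDual ℝ X) : Prop :=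
  ∀ x : X, Tendsto (fun n => f n x) atTop (nhds (g x))

/-- Convergence in the Mackey topology μ(X*,X): uniform convergence on every
weakly compact subset of X. -/
def MackeyTendsto {X : Type*} [NormedAddCommGroup X] [NormedSpace ℝ X]
    (f : ℕ → StrongDual ℝ X) (g : StrongDual ℝ X) : Prop :=
  ∀ L : Set X, IsWeaklyCompact L → ∀ ε : ℝ, 0 < ε →
    ∀ᶠ n in atTop, ∀ x ∈ L, |f n x - g x| < ε

/-- `y` is a convex block subsequence of `x`. -/
def IsConvexBlock {E : Type*} [AddCommGroup E] [Module ℝ E] (x y : ℕ → E) : Prop :=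
  ∃ (I : ℕ → Finset ℕ) (a : ℕ → ℝ),
    (∀ k, (I k).Nonempty) ∧
    (∀ k m m', m ∈ I k → m' ∈ I (k + 1) → m < m') ∧
    (∀ n, 0 ≤ a n) ∧
    (∀ k, ∑ n ∈ I k, a n = 1) ∧
    (∀ k, y k = ∑ n ∈ I k, a n • x n)

/-- Property (K): every weak*-convergent sequence in the dual admits a convex block
subsequence converging in the Mackey topology. -/
def PropertyK (X : Type*) [NormedAddCommGroup X] [NormedSpace ℝ X] : Prop :=
  ∀ (f : ℕ → StrongDual ℝ X) (g : StrongDual ℝ X), WStarTendsto f g →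
    ∃ (y : ℕ → StrongDual ℝ X) (h : StrongDual ℝ X), IsConvexBlock f y ∧ MackeyTendsto y h

/-- A family of sets strongly generates X if every weakly compact set is contained in
G + εB_X for some member G of the family. -/
def StronglyGenerates {X : Type*} [NormedAddCommGroup X] [NormedSpace ℝ X]
    (𝒢 : Set (Set X)) : Prop :=
  ∀ L : Set X, IsWeaklyCompact L → ∀ ε : ℝ, 0 < ε →
    ∃ G ∈ 𝒢, ∀ x ∈ L, ∃ g ∈ G, ‖x - g‖ ≤ ε

/-- SG(X): the least cardinality of a family of weakly compact subsets of X which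
strongly generates X. -/
noncomputable def SG (X : Type*) [NormedAddCommGroup X] [NormedSpace ℝ X] : Cardinal :=
  sInf { c : Cardinal | ∃ 𝒢 : Set (Set X), (∀ G ∈ 𝒢, IsWeaklyCompact G) ∧
    StronglyGenerates 𝒢 ∧ Cardinal.mk 𝒢 = c }

/-- The pseudo-intersection number 𝔭: the least cardinality of a family of infinite
subsets of ℕ with the finite intersection property (all finite intersections infinite)
but with no infinite pseudo-intersection. -/
noncomputable def pseudoIntersectionNumber : Cardinal :=
  sInf { c : Cardinal | ∃ M : Set (Set ℕ),
    (∀ A ∈ M, A.Infinite) ∧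
    (∀ F : Finset (Set ℕ), ↑F ⊆ M → Set.Infinite (⋂ A ∈ F, A)) ∧
    (¬ ∃ A : Set ℕ, A.Infinite ∧ ∀ B ∈ M, (A \ B).Finite) ∧
    Cardinal.mk M = c }

namespace SGpK

variable {K : Type*} [TopologicalSpace K] [CompactSpace K]

noncomputable def ssup (g : K → ℝ) : ℝ := sSup (Set.range g)

lemma le_ssup [Nonempty K] {g : K → ℝ} (hg : Continuous g) (x : K) : g x ≤ ssup g :=
  le_csSup (isCompact_range hg).bddAbove ⟨x, rfl⟩

lemma ssup_le [Nonempty K] {g : K → ℝ} {cc : ℝ} (h : ∀ x, g x ≤ cc) : ssup g ≤ cc :=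
  csSup_le (Set.range_nonempty g) (by rintro y ⟨x, rfl⟩; exact h x)

lemma exists_ssup [Nonempty K] {g : K → ℝ} (hg : Continuous g) : ∃ b, g b = ssup g := by
  obtain ⟨b, -, hb⟩ := isCompact_univ.exists_isMaxOn Set.univ_nonempty hg.continuousOn
  exact ⟨b, le_antisymm (le_ssup hg b) (ssup_le (fun x => hb (Set.mem_univ x)))⟩

lemma ssup_le_of_le [Nonempty K] {g h : K → ℝ} (hh : Continuous h) {cc : ℝ}
    (hle : ∀ x, g x ≤ h x + cc) : ssup g ≤ ssup h + cc :=
  ssup_le fun x => le_trans (hle x) (by linarith [le_ssup hh x])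

def okc (n : ℕ) (q : ℕ →₀ ℚ) : Prop :=
  (∀ j, 0 ≤ q j) ∧ (∑ j ∈ q.support, q j) = 1 ∧ ∀ j ∈ q.support, n ≤ j

noncomputable def wfn (f : ℕ → K → ℝ) (q : ℕ →₀ ℚ) : K → ℝ :=
  fun x => ∑ j ∈ q.support, (q j : ℝ) * f j x

lemma okc_single (n : ℕ) : okc n (Finsupp.single n (1:ℚ)) := by
  refine ⟨fun j => ?_, ?_, fun j hj => ?_⟩
  · rcases eq_or_ne j n with rfl | hne
    · simp
    · rw [Finsupp.single_apply, if_neg (fun h => hne h.symm)]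
  · rw [Finsupp.support_single_ne_zero n one_ne_zero]; simp
  · rw [Finsupp.support_single_ne_zero n one_ne_zero] at hj
    simp at hj; omega

lemma okc_mono {n m : ℕ} (h : m ≤ n) {q : ℕ →₀ ℚ} (hq : okc n q) : okc m q :=
  ⟨hq.1, hq.2.1, fun j hj => le_trans h (hq.2.2 j hj)⟩

variable {f : ℕ → K → ℝ}

lemma wfn_cont (hfc : ∀ n, Continuous (f n)) (q : ℕ →₀ ℚ) : Continuous (wfn f q) :=
  continuous_finset_sum _ fun j _ => continuous_const.mul (hfc j)

lemma wfn_nonneg (hf0 : ∀ n x, 0 ≤ f n x) {n : ℕ} {q : ℕ →₀ ℚ} (hq : okc n q) (x : K) :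
    0 ≤ wfn f q x :=
  Finset.sum_nonneg fun j _ => mul_nonneg (by exact_mod_cast hq.1 j) (hf0 j x)

lemma wfn_le {n : ℕ} {q : ℕ →₀ ℚ} (hq : okc n q) {x : K} {cc : ℝ}
    (h : ∀ j ∈ q.support, f j x ≤ cc) : wfn f q x ≤ cc := by
  have h1 : wfn f q x ≤ ∑ j ∈ q.support, (q j : ℝ) * cc := by
    refine Finset.sum_le_sum fun j hj => ?_
    exact mul_le_mul_of_nonneg_left (h j hj) (by exact_mod_cast hq.1 j)
  have h2 : ∑ j ∈ q.support, (q j : ℝ) * cc = cc := by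
    rw [← Finset.sum_mul]
    have : (∑ j ∈ q.support, (q j : ℝ)) = ((∑ j ∈ q.support, q j : ℚ) : ℝ) := by push_cast; ring
    rw [this, hq.2.1]; simp
  linarith

/-- convex combinations of valid coefficient systems are valid, and `wfn` is affine. -/
lemma combo (n m : ℕ) (d : ℕ → ℚ) (hd : ∀ k, 0 ≤ d k)
    (hsum : ∑ k ∈ Finset.range m, d k = 1) (qs : ℕ → ℕ →₀ ℚ) (hqs : ∀ k, okc n (qs k)) :
    ∃ Q : ℕ →₀ ℚ, okc n Q ∧
      ∀ x, wfn f Q x = ∑ k ∈ Finset.range m, (d k : ℝ) * wfn f (qs k) x := by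
  classical
  set Q : ℕ →₀ ℚ := ∑ k ∈ Finset.range m, d k • qs k with hQdef
  set T : Finset ℕ := (Finset.range m).biUnion (fun k => (qs k).support) with hTdef
  have hQapp : ∀ j, Q j = ∑ k ∈ Finset.range m, d k * qs k j := by
    intro j
    rw [hQdef, Finset.sum_apply']
    exact Finset.sum_congr rfl fun k _ => Finsupp.smul_apply _ _ _
  have hQsupp : Q.support ⊆ T := by
    intro j hj
    by_contra hjT
    have hz : ∀ k ∈ Finset.range m, d k * qs k j = 0 := by
      intro k hk
      have : qs k j = 0 := Finsupp.notMem_support_iff.1 fun hmem =>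
        hjT (Finset.mem_biUnion.2 ⟨k, hk, hmem⟩)
      rw [this, mul_zero]
    exact Finsupp.mem_support_iff.1 hj (by rw [hQapp, Finset.sum_eq_zero hz])
  have hsupp_sub : ∀ k ∈ Finset.range m, (qs k).support ⊆ T := fun k hk j hj =>
    Finset.mem_biUnion.2 ⟨k, hk, hj⟩
  have hQ0 : ∀ j, 0 ≤ Q j := fun j => by
    rw [hQapp]; exact Finset.sum_nonneg fun k _ => mul_nonneg (hd k) ((hqs k).1 j)
  refine ⟨Q, ⟨hQ0, ?_, ?_⟩, ?_⟩
  · calc ∑ j ∈ Q.support, Q j = ∑ j ∈ T, Q j :=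
          Finset.sum_subset hQsupp (fun j _ hj => Finsupp.notMem_support_iff.1 hj)
      _ = ∑ j ∈ T, ∑ k ∈ Finset.range m, d k * qs k j := Finset.sum_congr rfl fun j _ => hQapp j
      _ = ∑ k ∈ Finset.range m, ∑ j ∈ T, d k * qs k j := Finset.sum_comm
      _ = ∑ k ∈ Finset.range m, d k * ∑ j ∈ T, qs k j := by
          exact Finset.sum_congr rfl fun k _ => (Finset.mul_sum _ _ _).symm
      _ = ∑ k ∈ Finset.range m, d k * 1 := by
          refine Finset.sum_congr rfl fun k hk => ?_
          rw [← Finset.sum_subset (hsupp_sub k hk)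
            (fun j _ hj => Finsupp.notMem_support_iff.1 hj), (hqs k).2.1]
      _ = 1 := by simpa using hsum
  · intro j hj
    obtain ⟨k, hk, hjk⟩ := Finset.mem_biUnion.1 (hQsupp hj)
    exact (hqs k).2.2 j hjk
  · intro x
    calc wfn f Q x = ∑ j ∈ T, (Q j : ℝ) * f j x := by
          refine Finset.sum_subset hQsupp (fun j _ hj => ?_)
          rw [Finsupp.notMem_support_iff.1 hj]; simp
      _ = ∑ j ∈ T, ∑ k ∈ Finset.range m, (d k : ℝ) * ((qs k j : ℝ) * f j x) := by
          refine Finset.sum_congr rfl fun j _ => ?_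
          rw [hQapp]; push_cast; rw [Finset.sum_mul]; exact Finset.sum_congr rfl fun k _ => by ring
      _ = ∑ k ∈ Finset.range m, ∑ j ∈ T, (d k : ℝ) * ((qs k j : ℝ) * f j x) := Finset.sum_comm
      _ = ∑ k ∈ Finset.range m, (d k : ℝ) * wfn f (qs k) x := by
          refine Finset.sum_congr rfl fun k hk => ?_
          rw [← Finset.mul_sum]
          congr 1
          refine (Finset.sum_subset (hsupp_sub k hk) (fun j _ hj => ?_)).symm
          rw [Finsupp.notMem_support_iff.1 hj]; simp

theorem simonsCore [Nonempty K] (f : ℕ → K → ℝ) (M : ℝ)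
    (hfc : ∀ n, Continuous (f n)) (hf0 : ∀ n x, 0 ≤ f n x) (hfM : ∀ n x, f n x ≤ M)
    (hconv : ∀ x, Tendsto (fun n => f n x) atTop (nhds 0)) {ε : ℝ} (hε : 0 < ε) :
    ∃ q : ℕ →₀ ℚ, okc 0 q ∧ ∀ x, wfn f q x ≤ ε := by
  classical
  set ε₀ : ℝ := ε / 2 with hε₀def
  have hε₀ : 0 < ε₀ := by positivity
  have hM : 0 ≤ M := le_trans (hf0 0 (Classical.arbitrary K)) (hfM 0 _)
  set c : ℕ → ℝ := fun k => (2⁻¹ : ℝ) ^ (k + 1) with hcdef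
  have hcpos : ∀ k, 0 < c k := fun k => by positivity
  have hgeom : Summable (fun k : ℕ => (2⁻¹ : ℝ) ^ k) :=
    summable_geometric_of_lt_one (by norm_num) (by norm_num)
  have hcsum : Summable c := by
    have : c = fun k => (2⁻¹ : ℝ) * (2⁻¹ : ℝ) ^ k := by
      funext k; rw [hcdef]; ring
    rw [this]; exact hgeom.mul_left _
  have hctsum : ∑' k, c k = 1 := by
    have h1 : ∑' (k : ℕ), (2⁻¹ : ℝ) * (2⁻¹ : ℝ) ^ k = (2⁻¹ : ℝ) * ∑' (k : ℕ), (2⁻¹:ℝ)^k :=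
      tsum_mul_left
    have h2 : ∑' (k : ℕ), (2⁻¹ : ℝ) ^ k = 2 := by
      rw [tsum_geometric_of_lt_one (by norm_num) (by norm_num)]; norm_num
    have : ∑' k, c k = ∑' (k : ℕ), (2⁻¹ : ℝ) * (2⁻¹ : ℝ) ^ k := by
      refine tsum_congr fun k => ?_; rw [hcdef]; ring
    rw [this, h1, h2]; norm_num
  -- summability helper
  have hSumm : ∀ (g : ℕ → ℝ), (∀ k, 0 ≤ g k) → (∀ k, g k ≤ M) → Summable (fun k => c k * g k) := by
    intro g h1 h2
    refine Summable.of_nonneg_of_le (fun k => mul_nonneg (hcpos k).le (h1 k))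
      (fun k => mul_le_mul_of_nonneg_left (h2 k) (hcpos k).le) (hcsum.mul_right M)
  have htsumCM : ∀ r : ℝ, ∑' k, c k * r = r := by
    intro r; rw [tsum_mul_right, hctsum, one_mul]
  -- greedy choices
  have hex : ∀ (n : ℕ) (ψ : {g : K → ℝ // Continuous g}), ∃ Q, okc n Q ∧ ∀ Q', okc n Q' →
      ssup (fun x => ψ.1 x + c n * wfn f Q x) ≤
        ssup (fun x => ψ.1 x + c n * wfn f Q' x) + ε₀/2 * (4⁻¹:ℝ)^(n+1) := by
    intro n ψ
    have hcontQ : ∀ Q : ℕ →₀ ℚ, Continuous fun x => ψ.1 x + c n * wfn f Q x :=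
      fun Q => ψ.2.add (continuous_const.mul (wfn_cont hfc Q))
    set V : Set ℝ := {r | ∃ Q', okc n Q' ∧ r = ssup fun x => ψ.1 x + c n * wfn f Q' x} with hV
    have hVne : V.Nonempty := ⟨_, Finsupp.single n 1, okc_single n, rfl⟩
    obtain ⟨x₀⟩ := ‹Nonempty K›
    have hVbdd : BddBelow V := by
      refine ⟨ψ.1 x₀, ?_⟩
      rintro r ⟨Q', hQ', rfl⟩
      calc ψ.1 x₀ ≤ ψ.1 x₀ + c n * wfn f Q' x₀ := by
            have := mul_nonneg (hcpos n).le (wfn_nonneg hf0 hQ' x₀); linarith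
        _ ≤ _ := le_ssup (hcontQ Q') x₀
    have hlt : sInf V < sInf V + ε₀/2 * (4⁻¹:ℝ)^(n+1) := by
      have : (0:ℝ) < ε₀/2 * (4⁻¹:ℝ)^(n+1) := by positivity
      linarith
    obtain ⟨r, hrV, hr⟩ := exists_lt_of_csInf_lt hVne hlt
    obtain ⟨Q, hQ, rfl⟩ := hrV
    exact ⟨Q, hQ, fun Q' hQ' => le_trans hr.le
      (add_le_add_left (csInf_le hVbdd ⟨Q', hQ', rfl⟩) _)⟩
  choose pick hpick hgreedy using hex
  set step : ℕ → {g : K → ℝ // Continuous g} → {g : K → ℝ // Continuous g} := fun n ψ =>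
    ⟨fun x => ψ.1 x + c n * wfn f (pick n ψ) x,
      ψ.2.add (continuous_const.mul (wfn_cont hfc _))⟩ with hstepdef
  set Ψ : ℕ → {g : K → ℝ // Continuous g} :=
    fun n => Nat.rec ⟨fun _ => 0, continuous_const⟩ step n with hΨdef
  set q : ℕ → ℕ →₀ ℚ := fun n => pick n (Ψ n) with hqdef
  have hq : ∀ n, okc n (q n) := fun n => hpick n (Ψ n)
  have hΨs : ∀ n x, (Ψ (n+1)).1 x = (Ψ n).1 x + c n * wfn f (q n) x := fun n x => rfl
  have hΨ0 : ∀ x, (Ψ 0).1 x = 0 := fun x => rfl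
  -- the limit function
  have hwM : ∀ k x, wfn f (q k) x ≤ M := fun k x => wfn_le (hq k) (fun j _ => hfM j x)
  have hw0 : ∀ k x, 0 ≤ wfn f (q k) x := fun k x => wfn_nonneg hf0 (hq k) x
  have hsummφ : ∀ (x : K) (nn : ℕ), Summable (fun k => c k * wfn f (q (k + nn)) x) :=
    fun x nn => hSumm _ (fun k => hw0 _ x) (fun k => hwM _ x)
  set φ : K → ℝ := fun x => ∑' k, c k * wfn f (q k) x with hφdef
  have hφc : Continuous φ := by
    refine continuous_tsum (fun k => continuous_const.mul (wfn_cont hfc _))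
      (hcsum.mul_right M) (fun k x => ?_)
    rw [Real.norm_eq_abs, abs_of_nonneg (mul_nonneg (hcpos k).le (hw0 k x))]
    exact mul_le_mul_of_nonneg_left (hwM k x) (hcpos k).le
  set u : ℕ → K → ℝ := fun n x => ∑' k, c k * wfn f (q (k + n)) x with hudef
  have hu0 : ∀ n x, 0 ≤ u n x := fun n x =>
    tsum_nonneg (fun k => mul_nonneg (hcpos k).le (hw0 _ x))
  have hucont : ∀ n, Continuous (u n) := by
    intro n
    refine continuous_tsum (fun k => continuous_const.mul (wfn_cont hfc _))
      (hcsum.mul_right M) (fun k x => ?_)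
    rw [Real.norm_eq_abs, abs_of_nonneg (mul_nonneg (hcpos k).le (hw0 _ x))]
    exact mul_le_mul_of_nonneg_left (hwM _ x) (hcpos k).le
  have hId1 : ∀ n x, φ x = (Ψ n).1 x + (2⁻¹:ℝ)^n * u n x := by
    intro n x
    have hΨval : (Ψ n).1 x = ∑ k ∈ Finset.range n, c k * wfn f (q k) x := by
      induction n with
      | zero => simp [hΨ0]
      | succ n ih => rw [hΨs n x, ih, Finset.sum_range_succ]
    have hsplit := Summable.sum_add_tsum_nat_add (f := fun k => c k * wfn f (q k) x) n (hsummφ x 0 |>.congr (fun k => by rw [Nat.add_zero]))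
    have htail : ∑' k, c (k + n) * wfn f (q (k + n)) x = (2⁻¹:ℝ)^n * u n x := by
      have h1 : ∀ k : ℕ, c (k + n) * wfn f (q (k + n)) x
          = (2⁻¹:ℝ)^n * (c k * wfn f (q (k + n)) x) := by
        intro k
        have : c (k + n) = (2⁻¹:ℝ)^n * c k := by
          simp only [hcdef]; rw [← pow_add]; congr 1; omega
        rw [this]; ring
      rw [tsum_congr h1, tsum_mul_left]
    simp only [hφdef]
    rw [← hsplit, hΨval, htail]
  have huM : ∀ n x, u n x ≤ M := by
    intro n x
    calc u n x ≤ ∑' k, c k * M :=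
          Summable.tsum_le_tsum (fun k => mul_le_mul_of_nonneg_left (hwM _ x) (hcpos k).le)
            (hsummφ x n) (hcsum.mul_right M)
      _ = M := htsumCM M
  -- approximation of tails by finite rational convex combinations
  have happrox : ∀ (n : ℕ) (δ : ℝ), 0 < δ → ∃ Q, okc n Q ∧ ∀ x, |u n x - wfn f Q x| ≤ δ := by
    intro n δ hδ
    obtain ⟨m₀, hm₀⟩ := exists_pow_lt_of_lt_one (show (0:ℝ) < δ / (M + 1) by positivity)
      (show (2⁻¹:ℝ) < 1 by norm_num)
    set m : ℕ := m₀ + 1 with hmdef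
    have hm : (2⁻¹:ℝ)^m * (M + 1) ≤ δ := by
      have h1 : (2⁻¹:ℝ)^m ≤ (2⁻¹:ℝ)^m₀ :=
        pow_le_pow_of_le_one (by norm_num) (by norm_num) (by omega)
      have h2 : (2⁻¹:ℝ)^m₀ * (M+1) < δ :=
        (lt_div_iff₀ (show (0:ℝ) < M + 1 by linarith)).1 hm₀
      nlinarith [pow_nonneg (show (0:ℝ) ≤ 2⁻¹ by norm_num) m]
    -- rational partial geometric sums
    have hratsum : ∀ mm : ℕ, ∑ k ∈ Finset.range mm, (2⁻¹:ℚ)^(k+1) = 1 - (2⁻¹:ℚ)^mm := by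
      intro mm
      induction mm with
      | zero => simp
      | succ mm ih => rw [Finset.sum_range_succ, ih]; ring
    have hs_lt : (0:ℚ) < 1 - (2⁻¹:ℚ)^m := by
      have : (2⁻¹:ℚ)^m < 1 :=
        pow_lt_one₀ (by norm_num) (by norm_num) (by omega)
      linarith
    set d : ℕ → ℚ := fun k => (2⁻¹:ℚ)^(k+1) / (1 - (2⁻¹:ℚ)^m) with hddef
    have hd0 : ∀ k, 0 ≤ d k := fun k => by
      apply div_nonneg (by positivity) hs_lt.le
    have hdsum : ∑ k ∈ Finset.range m, d k = 1 := by
      rw [hddef, ← Finset.sum_div, hratsum, div_self hs_lt.ne']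
    obtain ⟨Q, hQok, hQw⟩ := combo (f := f) n m d hd0 hdsum (fun k => q (k + n))
      (fun k => okc_mono (Nat.le_add_left n k) (hq (k + n)))
    refine ⟨Q, hQok, fun x => ?_⟩
    -- split u n x
    have hsplit := Summable.sum_add_tsum_nat_add (f := fun k => c k * wfn f (q (k + n)) x) m (hsummφ x n)
    set P : ℝ := ∑ k ∈ Finset.range m, c k * wfn f (q (k + n)) x with hPdef
    set T : ℝ := ∑' k, c (k + m) * wfn f (q ((k + m) + n)) x with hTdef
    have hunx : u n x = P + T := by
      simp only [hudef]
      rw [← hsplit]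
    set s : ℝ := (2⁻¹:ℝ)^m with hsdef
    have hs0 : 0 < s := by positivity
    have hT0 : 0 ≤ T := tsum_nonneg (fun k => mul_nonneg (hcpos _).le (hw0 _ x))
    have hTM : T ≤ s * M := by
      have h1 : ∀ k : ℕ, c (k + m) * wfn f (q ((k + m) + n)) x ≤ s * (c k * M) := by
        intro k
        have hce : c (k + m) = s * c k := by
          simp only [hcdef, hsdef]; rw [← pow_add]; congr 1; omega
        rw [hce, mul_assoc]
        refine mul_le_mul_of_nonneg_left ?_ hs0.le
        exact mul_le_mul_of_nonneg_left (hwM _ x) (hcpos k).le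
      calc T ≤ ∑' k, s * (c k * M) := by
            refine Summable.tsum_le_tsum h1 ?_ ((hcsum.mul_right M).mul_left s)
            exact (summable_nat_add_iff m).2 (hsummφ x n)
        _ = s * M := by rw [tsum_mul_left, tsum_mul_right, hctsum, one_mul]
    -- wfn Q x in terms of P
    have hdcast : ∀ k, ((d k : ℚ) : ℝ) = c k / (1 - s) := by
      intro k
      simp only [hddef, hcdef, hsdef]
      push_cast
      norm_num
    have h1s : (0:ℝ) < 1 - s := by
      have : ((1 - (2⁻¹:ℚ)^m : ℚ) : ℝ) = 1 - s := by push_cast [hsdef]; norm_num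
      rw [← this]; exact_mod_cast hs_lt
    have hR : wfn f Q x * (1 - s) = P := by
      rw [hQw x, Finset.sum_mul, hPdef]
      refine Finset.sum_congr rfl fun k _ => ?_
      rw [hdcast k]
      field_simp
    have hRM : wfn f Q x ≤ M := wfn_le hQok (fun j _ => hfM j x)
    have hR0 : 0 ≤ wfn f Q x := wfn_nonneg hf0 hQok x
    -- |u - wfn Q| = |T - s * wfn Q| ≤ s(M+1) ≤ δ
    have hdiff : u n x - wfn f Q x = T - s * wfn f Q x := by
      rw [hunx, ← hR]; ring
    rw [hdiff, abs_le]
    constructor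
    · nlinarith
    · nlinarith
  -- main inductive estimate
  have hhalf : ∀ n, ssup ((Ψ (n+1)).1) ≤
      2⁻¹ * ssup ((Ψ n).1) + 2⁻¹ * ssup φ + ε₀ * (4⁻¹:ℝ)^(n+1) := by
    intro n
    obtain ⟨Qa, hQaok, hQa⟩ := happrox n (ε₀/2 * (2⁻¹:ℝ)^(n+1)) (by positivity)
    have e1 : ssup ((Ψ (n+1)).1) ≤
        ssup (fun x => (Ψ n).1 x + c n * wfn f Qa x) + ε₀/2 * (4⁻¹:ℝ)^(n+1) := by
      have : (Ψ (n+1)).1 = fun x => (Ψ n).1 x + c n * wfn f (q n) x := funext (hΨs n)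
      rw [this]
      exact hgreedy n (Ψ n) Qa hQaok
    have e2 : ssup (fun x => (Ψ n).1 x + c n * wfn f Qa x) ≤
        ssup (fun x => (Ψ n).1 x + c n * u n x) + ε₀/2 * (4⁻¹:ℝ)^(n+1) := by
      have hc4 : c n * (ε₀/2 * (2⁻¹:ℝ)^(n+1)) = ε₀/2 * (4⁻¹:ℝ)^(n+1) := by
        simp only [hcdef]
        rw [show ((4:ℝ))⁻¹ = 2⁻¹ * 2⁻¹ by norm_num, mul_pow]
        ring
      rw [← hc4]
      refine ssup_le_of_le (h := fun x => (Ψ n).1 x + c n * u n x) ((Ψ n).2.add (continuous_const.mul (hucont n))) (fun x => ?_)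
      have h := (abs_le.1 (hQa x)).1
      have := mul_le_mul_of_nonneg_left (show wfn f Qa x ≤ u n x + ε₀/2 * (2⁻¹:ℝ)^(n+1) by linarith)
        (hcpos n).le
      linarith
    have e3 : ssup (fun x => (Ψ n).1 x + c n * u n x) ≤ 2⁻¹ * ssup ((Ψ n).1) + 2⁻¹ * ssup φ := by
      refine ssup_le (fun x => ?_)
      have hid : (Ψ n).1 x + c n * u n x = 2⁻¹ * (Ψ n).1 x + 2⁻¹ * φ x := by
        have := hId1 n x
        simp only [hcdef]
        rw [pow_succ]
        nlinarith [hId1 n x]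
      rw [hid]
      have g1 := le_ssup (Ψ n).2 x
      have g2 := le_ssup hφc x
      linarith
    calc ssup ((Ψ (n+1)).1) ≤ _ := e1
      _ ≤ ssup (fun x => (Ψ n).1 x + c n * u n x) + ε₀/2 * (4⁻¹:ℝ)^(n+1) + ε₀/2 * (4⁻¹:ℝ)^(n+1) := by
          linarith
      _ ≤ 2⁻¹ * ssup ((Ψ n).1) + 2⁻¹ * ssup φ + ε₀ * (4⁻¹:ℝ)^(n+1) := by linarith
  have hssup0 : ssup ((Ψ 0).1) = 0 := by
    apply le_antisymm
    · exact ssup_le (fun x => by rw [hΨ0]; )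
    · obtain ⟨x₀⟩ := ‹Nonempty K›
      have := le_ssup (Ψ 0).2 x₀
      rw [hΨ0] at this; exact this
  have hind : ∀ n, ssup ((Ψ n).1) ≤ (1 - (2⁻¹:ℝ)^n) * ssup φ + ε₀ * ((2⁻¹:ℝ)^n - (4⁻¹:ℝ)^n) := by
    intro n
    induction n with
    | zero => simp [hssup0]
    | succ n ih =>
      have h := hhalf n
      have key : 2⁻¹ * ((1 - (2⁻¹:ℝ)^n) * ssup φ + ε₀ * ((2⁻¹:ℝ)^n - (4⁻¹:ℝ)^n)) + 2⁻¹ * ssup φ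
          + ε₀ * (4⁻¹:ℝ)^(n+1) = (1 - (2⁻¹:ℝ)^(n+1)) * ssup φ
          + ε₀ * ((2⁻¹:ℝ)^(n+1) - (4⁻¹:ℝ)^(n+1)) + ε₀ * ((4⁻¹:ℝ)^(n+1) - (4⁻¹:ℝ)^n / 2 + (4⁻¹:ℝ)^(n+1)) := by
        rw [pow_succ, pow_succ]
        ring
      have hnn : (4⁻¹:ℝ)^(n+1) - (4⁻¹:ℝ)^n / 2 + (4⁻¹:ℝ)^(n+1) = 0 := by
        rw [pow_succ]; ring
      have : 2⁻¹ * ssup ((Ψ n).1) ≤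
          2⁻¹ * ((1 - (2⁻¹:ℝ)^n) * ssup φ + ε₀ * ((2⁻¹:ℝ)^n - (4⁻¹:ℝ)^n)) := by linarith
      calc ssup ((Ψ (n+1)).1) ≤ _ := h
        _ ≤ 2⁻¹ * ((1 - (2⁻¹:ℝ)^n) * ssup φ + ε₀ * ((2⁻¹:ℝ)^n - (4⁻¹:ℝ)^n)) + 2⁻¹ * ssup φ
            + ε₀ * (4⁻¹:ℝ)^(n+1) := by linarith
        _ = _ := by rw [key, hnn]; ring
  -- maximum point of φ
  obtain ⟨b, hb⟩ := exists_ssup hφc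
  -- suprema of tails of (f k b)
  set σ : ℕ → ℝ := fun n => sSup ((fun k => f k b) '' Set.Ici n) with hσdef
  have hσne : ∀ n, ((fun k => f k b) '' Set.Ici n).Nonempty :=
    fun n => ⟨f n b, n, le_refl n, rfl⟩
  have hσbdd : ∀ n, BddAbove ((fun k => f k b) '' Set.Ici n) := by
    intro n
    refine ⟨M, ?_⟩
    rintro y ⟨k, -, rfl⟩
    exact hfM k b
  have hσ_ge : ∀ n k, n ≤ k → f k b ≤ σ n := fun n k hk =>
    le_csSup (hσbdd n) ⟨k, hk, rfl⟩
  have hσ_anti : ∀ n nn, n ≤ nn → σ nn ≤ σ n := by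
    intro n nn h
    exact csSup_le_csSup (hσbdd n) (hσne nn) (Set.image_mono (Set.Ici_subset_Ici.2 h))
  have hσ_small : ∀ δ : ℝ, 0 < δ → ∃ n, σ n ≤ δ := by
    intro δ hδ
    have hev : ∀ᶠ k in atTop, f k b < δ := (hconv b).eventually_lt_const hδ
    obtain ⟨N, hN⟩ := eventually_atTop.1 hev
    exact ⟨N, csSup_le (hσne N) (by rintro y ⟨k, hk, rfl⟩; exact (hN k hk).le)⟩
  have hwσ : ∀ (n : ℕ) (Q : ℕ →₀ ℚ), okc n Q → wfn f Q b ≤ σ n :=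
    fun n Q hQ => wfn_le hQ (fun j hj => hσ_ge n j (hQ.2.2 j hj))
  have huσ : ∀ n, u n b ≤ σ n := by
    intro n
    calc u n b ≤ ∑' k, c k * σ n := by
          refine Summable.tsum_le_tsum (fun k => ?_) (hsummφ b n) (hcsum.mul_right (σ n))
          refine mul_le_mul_of_nonneg_left ?_ (hcpos k).le
          exact le_trans (hwσ (k+n) _ (hq (k+n))) (hσ_anti n (k+n) (Nat.le_add_left n k))
      _ = σ n := htsumCM (σ n)
  -- the key lower bound for σ
  have hkey : ∀ n, ssup φ - ε₀ ≤ σ n := by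
    intro n
    set r : ℝ := (2⁻¹:ℝ)^n with hrdef
    have hr0 : 0 < r := by positivity
    have h1 : (Ψ (n+1)).1 b = φ b - (2⁻¹:ℝ)^(n+1) * u (n+1) b := by
      rw [hId1 (n+1) b]; ring
    have h2 : (Ψ n).1 b ≤ (1 - r) * ssup φ + ε₀ * r := by
      refine le_trans (le_ssup (Ψ n).2 b) (le_trans (hind n) ?_)
      have : (0:ℝ) ≤ ε₀ * (4⁻¹:ℝ)^n := by positivity
      simp only [hrdef]
      nlinarith
    have h3 : c n * wfn f (q n) b = (Ψ (n+1)).1 b - (Ψ n).1 b := by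
      rw [hΨs n b]; ring
    have h4 : wfn f (q n) b ≤ σ n := hwσ n (q n) (hq n)
    have h5 : u (n+1) b ≤ σ n :=
      le_trans (huσ (n+1)) (hσ_anti n (n+1) (Nat.le_succ n))
    have hcr : c n = r * 2⁻¹ := by simp only [hcdef, hrdef]; rw [pow_succ]
    have hp : (2⁻¹:ℝ)^(n+1) = r * 2⁻¹ := by rw [pow_succ, hrdef]
    -- combine
    have hu0' := hu0 (n+1) b
    have hfinal : r * (ssup φ - ε₀) ≤ r * σ n := by
      have e1 : c n * wfn f (q n) b ≤ (r * 2⁻¹) * σ n := by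
        rw [hcr]
        exact mul_le_mul_of_nonneg_left h4 (by positivity)
      have e2 : (Ψ (n+1)).1 b ≥ ssup φ - (r * 2⁻¹) * σ n := by
        rw [h1, hb, hp]
        have := mul_le_mul_of_nonneg_left h5 (show (0:ℝ) ≤ r * 2⁻¹ by positivity)
        linarith
      nlinarith
    exact le_of_mul_le_mul_left (by linarith [hfinal]) hr0
  have hSφ : ssup φ ≤ ε₀ := by
    refine le_of_forall_pos_le_add (fun δ hδ => ?_)
    obtain ⟨n, hn⟩ := hσ_small δ hδ
    linarith [hkey n]
  -- conclusion: q 0 works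
  refine ⟨q 0, hq 0, fun x => ?_⟩
  have hid := hId1 1 x
  have hΨ1 : (Ψ 1).1 x = c 0 * wfn f (q 0) x := by
    have h := hΨs 0 x
    rw [hΨ0, zero_add] at h
    linarith [h]
  have hc0 : c 0 = 2⁻¹ := by simp [hcdef]
  have hu1 := hu0 1 x
  have hφle : φ x ≤ ssup φ := le_ssup hφc x
  have : wfn f (q 0) x = 2 * (φ x - (2⁻¹:ℝ)^1 * u 1 x) := by
    rw [hid, hΨ1, hc0]; ring
  rw [this]
  have : (2⁻¹:ℝ)^1 * u 1 x ≥ 0 := by positivity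
  calc 2 * (φ x - (2⁻¹:ℝ)^1 * u 1 x) ≤ 2 * φ x := by linarith
    _ ≤ 2 * ε₀ := by linarith
    _ = ε := by rw [hε₀def]; ring


end SGpK

open SGpK NormedSpace

section App
variable {X : Type*} [NormedAddCommGroup X] [NormedSpace ℝ X]

def IsWeaklyCompact' (L : Set X) : Prop := IsCompact (toWeakSpace ℝ X '' L)

lemma weakEval_cont (φ : StrongDual ℝ X) :
    Continuous fun z : WeakSpace ℝ X => φ ((toWeakSpace ℝ X).symm z) :=
  WeakBilin.eval_continuous _ φ

lemma bounded_of_wc [CompleteSpace X] {W : Set X} (hW : IsWeaklyCompact' W) :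
    ∃ R : ℝ, 0 ≤ R ∧ ∀ x ∈ W, ‖x‖ ≤ R := by
  have hpt : ∀ φ : StrongDual ℝ X, ∃ C, ∀ i : ↥W, ‖(inclusionInDoubleDual ℝ X i) φ‖ ≤ C := by
    intro φ
    have hcont : Continuous fun z : WeakSpace ℝ X => φ ((toWeakSpace ℝ X).symm z) :=
      weakEval_cont φ
    have hcomp : IsCompact ((fun z : WeakSpace ℝ X => φ ((toWeakSpace ℝ X).symm z)) ''
        (toWeakSpace ℝ X '' W)) := hW.image hcont
    obtain ⟨C, hC⟩ := hcomp.isBounded.subset_closedBall 0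
    refine ⟨C, fun i => ?_⟩
    have hmem : φ i.1 ∈ (fun z : WeakSpace ℝ X => φ ((toWeakSpace ℝ X).symm z)) ''
        (toWeakSpace ℝ X '' W) := by
      refine ⟨toWeakSpace ℝ X i.1, Set.mem_image_of_mem _ i.2, ?_⟩
      simp
    have := hC hmem
    rw [Metric.mem_closedBall, Real.dist_0_eq_abs] at this
    simpa [NormedSpace.inclusionInDoubleDual] using this
  obtain ⟨C', hC'⟩ := banach_steinhaus hpt
  refine ⟨max C' 0, le_max_right _ _, fun x hx => ?_⟩
  have h1 : ‖inclusionInDoubleDual ℝ X x‖ ≤ C' := hC' ⟨x, hx⟩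
  have h2 : ‖x‖ = ‖inclusionInDoubleDual ℝ X x‖ :=
    ((inclusionInDoubleDualLi ℝ (E := X)).norm_map x).symm
  rw [h2] at *
  exact le_trans h1 (le_max_left _ _)

/-- the key existence of small far-out rational convex blocks -/
lemma keyblock [CompleteSpace X] (f' : ℕ → StrongDual ℝ X) {C : ℝ} (hC : ∀ n, ‖f' n‖ ≤ C)
    (h0 : ∀ x : X, Filter.Tendsto (fun n => f' n x) Filter.atTop (nhds 0))
    {W : Set X} (hW : IsWeaklyCompact' W) {ε : ℝ} (hε : 0 < ε) (N : ℕ) :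
    ∃ p : ℕ →₀ ℚ, (∀ j, 0 ≤ p j) ∧ (∑ j ∈ p.support, p j) = 1 ∧
      (∀ j ∈ p.support, N ≤ j) ∧ p.support.Nonempty ∧
      ∀ x ∈ W, |∑ j ∈ p.support, (p j : ℝ) * f' j x| ≤ ε := by
  classical
  obtain ⟨R, hR0, hR⟩ := bounded_of_wc hW
  have hsupp1 : ∀ p : ℕ →₀ ℚ, (∑ j ∈ p.support, p j) = 1 → p.support.Nonempty := by
    intro p hp
    rcases Finset.eq_empty_or_nonempty p.support with he | hne
    · rw [he] at hp; simp at hp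
    · exact hne
  rcases Set.eq_empty_or_nonempty W with rfl | hWne
  · refine ⟨Finsupp.single N 1, (okc_single N).1, (okc_single N).2.1,
      (okc_single N).2.2, hsupp1 _ (okc_single N).2.1, by simp⟩
  · set KS : Set (WeakSpace ℝ X) := toWeakSpace ℝ X '' W with hKS
    haveI : CompactSpace ↥KS := isCompact_iff_compactSpace.mp hW
    haveI : Nonempty ↥KS := by
      obtain ⟨w, hw⟩ := hWne
      exact ⟨⟨toWeakSpace ℝ X w, Set.mem_image_of_mem _ hw⟩⟩
    set F : ℕ → ↥KS → ℝ := fun j z => |f' (N + j) ((toWeakSpace ℝ X).symm z.1)| with hF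
    have hmemW : ∀ z : ↥KS, (toWeakSpace ℝ X).symm z.1 ∈ W := by
      rintro ⟨z, hz⟩
      obtain ⟨w, hw, rfl⟩ := hz
      simpa using hw
    have hFc : ∀ j, Continuous (F j) :=
      fun j => ((weakEval_cont (f' (N + j))).comp continuous_subtype_val).abs
    have hF0 : ∀ j z, 0 ≤ F j z := fun j z => abs_nonneg _
    have hFM : ∀ j z, F j z ≤ C * R := by
      intro j z
      calc F j z ≤ ‖f' (N + j)‖ * ‖(toWeakSpace ℝ X).symm z.1‖ :=
            (f' (N + j)).le_opNorm _
        _ ≤ C * R := by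
            have h1 := hR _ (hmemW z)
            have h2 := hC (N + j)
            have h3 : (0:ℝ) ≤ ‖f' (N+j)‖ := norm_nonneg _
            nlinarith [norm_nonneg ((toWeakSpace ℝ X).symm z.1)]
    have hFconv : ∀ z, Filter.Tendsto (fun j => F j z) Filter.atTop (nhds 0) := by
      intro z
      have h1 : Filter.Tendsto (fun j : ℕ => f' (N + j) ((toWeakSpace ℝ X).symm z.1))
          Filter.atTop (nhds 0) := by
        have := (h0 ((toWeakSpace ℝ X).symm z.1)).comp (Filter.tendsto_add_atTop_nat N)
        simpa [Function.comp_def, Nat.add_comm] using this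
      simpa using h1.abs
    obtain ⟨q, hqok, hqb⟩ := simonsCore F (C * R) hFc hF0 hFM hFconv hε
    set emb : ℕ ↪ ℕ := ⟨fun a => N + a, fun a b h => Nat.add_left_cancel h⟩ with hemb
    set p : ℕ →₀ ℚ := Finsupp.embDomain emb q with hp
    have hpsupp : p.support = q.support.map emb := Finsupp.support_embDomain emb q
    have hp0 : ∀ j, 0 ≤ p j := by
      intro j
      by_cases hj : j ∈ p.support
      · rw [hpsupp] at hj
        obtain ⟨a, ha, rfl⟩ := Finset.mem_map.1 hj
        rw [hp, Finsupp.embDomain_apply_self]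
        exact hqok.1 a
      · rw [Finsupp.notMem_support_iff.1 hj]
    have hp1 : (∑ j ∈ p.support, p j) = 1 := by
      rw [hpsupp, Finset.sum_map]
      rw [← hqok.2.1]
      exact Finset.sum_congr rfl fun a _ => by rw [hp, Finsupp.embDomain_apply_self]
    refine ⟨p, hp0, hp1, ?_, hsupp1 _ hp1, ?_⟩
    · intro j hj
      rw [hpsupp] at hj
      obtain ⟨a, ha, rfl⟩ := Finset.mem_map.1 hj
      exact Nat.le_add_right N a
    · intro x hx
      set z : ↥KS := ⟨toWeakSpace ℝ X x, Set.mem_image_of_mem _ hx⟩ with hz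
      have hzx : (toWeakSpace ℝ X).symm z.1 = x := by simp [hz]
      have hble := hqb z
      have heq : ∑ j ∈ p.support, (p j : ℝ) * f' j x
          = ∑ a ∈ q.support, (q a : ℝ) * f' (N + a) x := by
        rw [hpsupp, Finset.sum_map]
        refine Finset.sum_congr rfl fun a _ => ?_
        rw [hp, Finsupp.embDomain_apply_self]
        rfl
      have habs : |∑ a ∈ q.support, (q a : ℝ) * f' (N + a) x| ≤
          ∑ a ∈ q.support, (q a : ℝ) * |f' (N + a) x| := by
        refine le_trans (Finset.abs_sum_le_sum_abs _ _) ?_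
        refine Finset.sum_le_sum fun a _ => ?_
        rw [abs_mul, abs_of_nonneg (by exact_mod_cast hqok.1 a : (0:ℝ) ≤ (q a : ℝ))]
      have hwfneq : wfn F q z = ∑ a ∈ q.support, (q a : ℝ) * |f' (N + a) x| := by
        refine Finset.sum_congr rfl fun a _ => ?_
        rw [hF]
        simp only [hzx]
      rw [heq]
      exact le_trans habs (by rw [← hwfneq]; exact hble)

end App

section Comb

/-- countable FIP families of infinite sets have pseudo-intersections -/
lemma countable_pseudo {M : Set (Set ℕ)} (hc : M.Countable)
    (h2 : ∀ F : Finset (Set ℕ), ↑F ⊆ M → Set.Infinite (⋂ A ∈ F, A)) :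
    ∃ A : Set ℕ, A.Infinite ∧ ∀ B ∈ M, (A \ B).Finite := by
  classical
  rcases M.eq_empty_or_nonempty with rfl | hne
  · exact ⟨Set.univ, Set.infinite_univ, by simp⟩
  obtain ⟨e, rfl⟩ := Set.Countable.exists_eq_range hc hne
  set B : ℕ → Set ℕ := fun n => {x | ∀ i ≤ n, x ∈ e i} with hB
  have hBinf : ∀ n, (B n).Infinite := by
    intro n
    set F : Finset (Set ℕ) := (Finset.range (n+1)).image e with hF
    have hFsub : ↑F ⊆ Set.range e := by
      intro s hs
      obtain ⟨i, -, rfl⟩ := Finset.mem_image.1 hs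
      exact ⟨i, rfl⟩
    refine (h2 F hFsub).mono ?_
    intro x hx i hi
    have : e i ∈ F := Finset.mem_image.2 ⟨i, Finset.mem_range.2 (by omega), rfl⟩
    exact (Set.mem_iInter₂.1 hx) (e i) this
  have hstep : ∀ (n x : ℕ), ∃ y, y ∈ B (n+1) ∧ x < y := by
    intro n x
    obtain ⟨y, hy1, hy2⟩ := (hBinf (n+1)).exists_gt x
    exact ⟨y, hy1, hy2⟩
  choose nxt hnxt1 hnxt2 using hstep
  set a : ℕ → ℕ := fun n => Nat.rec (hBinf 0).nonempty.some nxt n with ha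
  have ha0 : a 0 ∈ B 0 := (hBinf 0).nonempty.some_mem
  have haS : ∀ n, a (n+1) ∈ B (n+1) ∧ a n < a (n+1) := fun n => ⟨hnxt1 n (a n), hnxt2 n (a n)⟩
  have hmono : StrictMono a := strictMono_nat_of_lt_succ (fun n => (haS n).2)
  have hmem : ∀ n, a n ∈ B n := by
    intro n
    cases n with
    | zero => exact ha0
    | succ n => exact (haS n).1
  refine ⟨Set.range a, Set.infinite_range_of_injective hmono.injective, ?_⟩
  rintro Bi ⟨i, rfl⟩
  refine Set.Finite.subset ((Set.finite_Iio i).image a) ?_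
  rintro x ⟨⟨n, rfl⟩, hx⟩
  refine ⟨n, ?_, rfl⟩
  by_contra hni
  exact hx (hmem n i (by simpa using hni))

lemma uncountable_of_pset {M : Set (Set ℕ)}
    (h2 : ∀ F : Finset (Set ℕ), ↑F ⊆ M → Set.Infinite (⋂ A ∈ F, A))
    (h3 : ¬ ∃ A : Set ℕ, A.Infinite ∧ ∀ B ∈ M, (A \ B).Finite) :
    Cardinal.aleph0 < Cardinal.mk M := by
  by_contra hle
  push_neg at hle
  haveI : Countable ↥M := Cardinal.mk_le_aleph0_iff.1 hle
  exact h3 (countable_pseudo (Set.countable_coe_iff.1 ‹_›) h2)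

end Comb

universe u

theorem propertyK_of_SG_lt_p (X : Type u) [NormedAddCommGroup X] [NormedSpace ℝ X]
    [CompleteSpace X] (h : SG X < Cardinal.lift.{u} pseudoIntersectionNumber) : PropertyK X := by
  classical
  intro f g hfg
  -- step 1 : the shifted sequence and its uniform bound
  set f' : ℕ → StrongDual ℝ X := fun n => f n - g with hf'def
  have h0 : ∀ x : X, Tendsto (fun n => f' n x) atTop (nhds 0) := by
    intro x
    have h1 := (hfg x).sub_const (g x)
    simpa [hf'def, sub_self] using h1
  have hptb : ∀ x : X, ∃ Cx, ∀ n, ‖f' n x‖ ≤ Cx := by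
    intro x
    obtain ⟨Cx, hCx⟩ := ((h0 x).norm).bddAbove_range
    exact ⟨Cx, fun n => hCx ⟨n, rfl⟩⟩
  obtain ⟨C, hC⟩ := banach_steinhaus hptb
  have hC0 : 0 ≤ C := le_trans (norm_nonneg _) (hC 0)
  -- step 2 : a strongly generating family realizing SG X
  have hSGne : { c : Cardinal | ∃ 𝒢 : Set (Set X), (∀ G ∈ 𝒢, IsWeaklyCompact G) ∧
      StronglyGenerates 𝒢 ∧ Cardinal.mk 𝒢 = c }.Nonempty := by
    refine ⟨_, {G : Set X | IsWeaklyCompact G}, fun G hG => hG, ?_, rfl⟩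
    intro L hL ε hε
    exact ⟨L, hL, fun x hx => ⟨x, hx, by simp [hε.le]⟩⟩
  obtain ⟨𝒢, h𝒢wc, h𝒢gen, h𝒢mk⟩ := csInf_mem hSGne
  -- step 3 : facts about 𝔭
  have hSpne : { c : Cardinal | ∃ M : Set (Set ℕ),
      (∀ A ∈ M, A.Infinite) ∧
      (∀ F : Finset (Set ℕ), ↑F ⊆ M → Set.Infinite (⋂ A ∈ F, A)) ∧
      (¬ ∃ A : Set ℕ, A.Infinite ∧ ∀ B ∈ M, (A \ B).Finite) ∧
      Cardinal.mk M = c }.Nonempty := by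
    rcases Set.eq_empty_or_nonempty { c : Cardinal | ∃ M : Set (Set ℕ),
      (∀ A ∈ M, A.Infinite) ∧
      (∀ F : Finset (Set ℕ), ↑F ⊆ M → Set.Infinite (⋂ A ∈ F, A)) ∧
      (¬ ∃ A : Set ℕ, A.Infinite ∧ ∀ B ∈ M, (A \ B).Finite) ∧
      Cardinal.mk M = c } with he | hne
    · exfalso
      rw [pseudoIntersectionNumber, he, Cardinal.sInf_empty] at h
      rw [Cardinal.lift_zero] at h
      exact (Cardinal.zero_le (SG X)).not_gt h
    · exact hne
  have haleph : Cardinal.aleph0 < pseudoIntersectionNumber := by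
    obtain ⟨Mw, hM1, hM2, hM3, hMmk⟩ := csInf_mem hSpne
    rw [pseudoIntersectionNumber, ← hMmk]
    exact uncountable_of_pset hM2 hM3
  -- step 4 : encoding of rational convex blocks
  obtain ⟨ι, hι⟩ : ∃ ι : (ℕ →₀ ℚ) → ℕ, Function.Injective ι :=
    exists_injective_nat (ℕ →₀ ℚ)
  set Λ : (ℕ →₀ ℚ) → StrongDual ℝ X := fun p => ∑ j ∈ p.support, (p j : ℝ) • f' j with hΛdef
  have hΛapp : ∀ p x, Λ p x = ∑ j ∈ p.support, (p j : ℝ) * f' j x := by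
    intro p x
    rw [hΛdef]
    simp [ContinuousLinearMap.sum_apply]
  have hΛnorm : ∀ p : ℕ →₀ ℚ, (∀ j, 0 ≤ p j) → (∑ j ∈ p.support, p j) = 1 → ‖Λ p‖ ≤ C := by
    intro p hp0 hp1
    rw [hΛdef]
    refine le_trans (norm_sum_le _ _) ?_
    have e1 : ∀ j ∈ p.support, ‖(p j : ℝ) • f' j‖ ≤ (p j : ℝ) * C := by
      intro j hj
      rw [norm_smul, Real.norm_eq_abs, abs_of_nonneg (by exact_mod_cast hp0 j : (0:ℝ) ≤ (p j:ℝ))]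
      exact mul_le_mul_of_nonneg_left (hC j) (by exact_mod_cast hp0 j)
    refine le_trans (Finset.sum_le_sum e1) ?_
    rw [← Finset.sum_mul]
    have : (∑ j ∈ p.support, (p j : ℝ)) = 1 := by exact_mod_cast hp1
    rw [this, one_mul]
  set A : Set X → ℕ → ℕ → Set (ℕ →₀ ℚ) := fun G k N =>
    {p | (∀ j, 0 ≤ p j) ∧ (∑ j ∈ p.support, p j) = 1 ∧ (∀ j ∈ p.support, N ≤ j) ∧
      ∀ x ∈ G, |Λ p x| ≤ 1/(k+1)} with hAdef
  -- step 5 : these sets are infinite, and finite intersections over a weakly compact union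
  have hGoodInf : ∀ (W : Set X), IsWeaklyCompact W → ∀ (ε : ℝ), 0 < ε → ∀ N₀ : ℕ,
      {p : ℕ →₀ ℚ | (∀ j, 0 ≤ p j) ∧ (∑ j ∈ p.support, p j) = 1 ∧
        (∀ j ∈ p.support, N₀ ≤ j) ∧ ∀ x ∈ W, |Λ p x| ≤ ε}.Infinite := by
    intro W hW ε hε N₀
    intro hfin
    have hUfin : (⋃ p ∈ {p : ℕ →₀ ℚ | (∀ j, 0 ≤ p j) ∧ (∑ j ∈ p.support, p j) = 1 ∧
        (∀ j ∈ p.support, N₀ ≤ j) ∧ ∀ x ∈ W, |Λ p x| ≤ ε},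
        (↑p.support : Set ℕ)).Finite :=
      Set.Finite.biUnion hfin (fun p _ => p.support.finite_toSet)
    obtain ⟨Bd, hBd⟩ := hUfin.bddAbove
    obtain ⟨p, hp0, hp1, hpN, hpne, hpb⟩ := keyblock f' hC h0 hW hε (max N₀ (Bd+1))
    have hpmem : p ∈ {p : ℕ →₀ ℚ | (∀ j, 0 ≤ p j) ∧ (∑ j ∈ p.support, p j) = 1 ∧
        (∀ j ∈ p.support, N₀ ≤ j) ∧ ∀ x ∈ W, |Λ p x| ≤ ε} := by
      refine ⟨hp0, hp1, fun j hj => le_trans (le_max_left _ _) (hpN j hj), fun x hx => ?_⟩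
      rw [hΛapp]
      exact hpb x hx
    obtain ⟨j₀, hj₀⟩ := hpne
    have hj₀mem : j₀ ∈ ⋃ p ∈ {p : ℕ →₀ ℚ | (∀ j, 0 ≤ p j) ∧ (∑ j ∈ p.support, p j) = 1 ∧
        (∀ j ∈ p.support, N₀ ≤ j) ∧ ∀ x ∈ W, |Λ p x| ≤ ε}, (↑p.support : Set ℕ) :=
      Set.mem_biUnion hpmem (by simpa using hj₀)
    have h1 : j₀ ≤ Bd := hBd hj₀mem
    have h2 : Bd + 1 ≤ j₀ := le_trans (le_max_right _ _) (hpN j₀ hj₀)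
    omega
  -- step 6 : the family ℳ
  set h𝒜 : ↥𝒢 × ULift.{u} ℕ × ULift.{u} ℕ → Set ℕ :=
    fun t => ι '' (A t.1.1 t.2.1.down t.2.2.down) with h𝒜def
  set ℳ : Set (Set ℕ) := Set.range h𝒜 with hℳdef
  have hA_as_good : ∀ (G : Set X) (k N : ℕ), A G k N =
      {p : ℕ →₀ ℚ | (∀ j, 0 ≤ p j) ∧ (∑ j ∈ p.support, p j) = 1 ∧
        (∀ j ∈ p.support, N ≤ j) ∧ ∀ x ∈ G, |Λ p x| ≤ 1/(k+1)} := fun G k N => rfl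
  have hkpos : ∀ k : ℕ, (0:ℝ) < 1/(k+1) := by
    intro k
    have : (0:ℝ) < (k:ℝ) + 1 := by positivity
    positivity
  have hAinf : ∀ (G : Set X), G ∈ 𝒢 → ∀ k N : ℕ, (A G k N).Infinite := by
    intro G hG k N
    rw [hA_as_good]
    exact hGoodInf G (h𝒢wc G hG) _ (hkpos k) N
  -- step 7 : cardinality of ℳ
  have hcard : Cardinal.mk ℳ < pseudoIntersectionNumber := by
    have h1 : Cardinal.lift.{u} (Cardinal.mk ℳ) ≤
        Cardinal.lift.{0} (Cardinal.mk (↥𝒢 × ULift.{u} ℕ × ULift.{u} ℕ)) :=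
      Cardinal.mk_range_le_lift
    rw [Cardinal.lift_uzero] at h1
    have h2 : Cardinal.mk (↥𝒢 × ULift.{u} ℕ × ULift.{u} ℕ)
        = Cardinal.mk ↥𝒢 * (Cardinal.aleph0 * Cardinal.aleph0) := by
      simp [Cardinal.mk_prod, Cardinal.mk_uLift, Cardinal.mk_nat, Cardinal.lift_aleph0,
        Cardinal.lift_id]
    have hale : Cardinal.aleph0 ≤ Cardinal.lift.{u} pseudoIntersectionNumber := by
      have := Cardinal.lift_lt.2 haleph
      rw [Cardinal.lift_aleph0] at this
      exact this.le
    have h3 : Cardinal.mk ↥𝒢 * (Cardinal.aleph0 * Cardinal.aleph0) <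
        Cardinal.lift.{u} pseudoIntersectionNumber := by
      refine Cardinal.mul_lt_of_lt hale ?_ ?_
      · rw [h𝒢mk]; exact h
      · rw [Cardinal.aleph0_mul_aleph0]
        have h4 := Cardinal.lift_lt.2 haleph
        rw [Cardinal.lift_aleph0] at h4
        exact h4
    have h5 : Cardinal.lift.{u} (Cardinal.mk ℳ) < Cardinal.lift.{u} pseudoIntersectionNumber :=
      lt_of_le_of_lt (h1.trans h2.le) h3
    exact Cardinal.lift_lt.1 h5
  -- step 8 : ℳ has the FIP with infinite members, or else we get a pseudo-intersection
  have hℳmem_inf : ∀ B ∈ ℳ, B.Infinite := by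
    rintro B ⟨t, rfl⟩
    exact Set.Infinite.image (hι.injOn) (hAinf t.1.1 t.1.2 t.2.1.down t.2.2.down)
  have hℳfip : ∀ F : Finset (Set ℕ), ↑F ⊆ ℳ → Set.Infinite (⋂ B ∈ F, B) := by
    intro F hF
    have hch : ∀ B ∈ F, ∃ t : ↥𝒢 × ULift.{u} ℕ × ULift.{u} ℕ, h𝒜 t = B := by
      intro B hB
      exact hF hB
    choose T hT using hch
    set I : Finset (↥𝒢 × ULift.{u} ℕ × ULift.{u} ℕ) :=
      F.attach.image (fun b => T b.1 b.2) with hIdef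
    set W : Set X := ⋃ t ∈ I, (t.1.1 : Set X) with hWdef
    have hWc : IsWeaklyCompact W := by
      have himg : toWeakSpace ℝ X '' W = ⋃ t ∈ I, toWeakSpace ℝ X '' (t.1.1 : Set X) := by
        rw [hWdef]
        exact Set.image_iUnion₂ _ _
      rw [IsWeaklyCompact, himg]
      exact Set.Finite.isCompact_biUnion (I.finite_toSet)
        (fun t _ => h𝒢wc t.1.1 t.1.2)
    set kk : ℕ := I.sup (fun t => t.2.1.down) with hkk
    set NN : ℕ := I.sup (fun t => t.2.2.down) with hNN
    have hSsub : ∀ t ∈ I,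
        {p : ℕ →₀ ℚ | (∀ j, 0 ≤ p j) ∧ (∑ j ∈ p.support, p j) = 1 ∧
          (∀ j ∈ p.support, NN ≤ j) ∧ ∀ x ∈ W, |Λ p x| ≤ 1/(kk+1)} ⊆
        A t.1.1 t.2.1.down t.2.2.down := by
      rintro t ht p ⟨hp0, hp1, hpN, hpb⟩
      refine ⟨hp0, hp1, fun j hj => le_trans (Finset.le_sup (f := fun t => t.2.2.down) ht)
        (hpN j hj), fun x hx => ?_⟩
      have hxW : x ∈ W := Set.mem_biUnion ht hx
      refine le_trans (hpb x hxW) ?_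
      have h1 : (t.2.1.down : ℝ) + 1 ≤ (kk:ℝ) + 1 := by
        have := Finset.le_sup (f := fun t => t.2.1.down) ht
        have : (t.2.1.down : ℝ) ≤ (kk : ℝ) := by exact_mod_cast this
        linarith
      rw [div_le_div_iff₀ (by positivity) (by positivity)]
      nlinarith
    have hSinf := hGoodInf W hWc (1/(kk+1)) (hkpos kk) NN
    refine Set.Infinite.mono ?_ (hSinf.image (hι.injOn))
    intro x hx
    rw [Set.mem_iInter₂]
    intro B hB
    obtain ⟨p, hp, rfl⟩ := hx
    rw [← hT B hB]
    exact ⟨p, hSsub (T B hB) (Finset.mem_image.2 ⟨⟨B, hB⟩, Finset.mem_attach _ _, rfl⟩) hp, rfl⟩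
  have hpsi : ∃ Ap : Set ℕ, Ap.Infinite ∧ ∀ B ∈ ℳ, (Ap \ B).Finite := by
    by_contra hno
    have hmem : Cardinal.mk ℳ ∈ { c : Cardinal | ∃ M : Set (Set ℕ),
        (∀ A ∈ M, A.Infinite) ∧
        (∀ F : Finset (Set ℕ), ↑F ⊆ M → Set.Infinite (⋂ A ∈ F, A)) ∧
        (¬ ∃ A : Set ℕ, A.Infinite ∧ ∀ B ∈ M, (A \ B).Finite) ∧
        Cardinal.mk M = c } := ⟨ℳ, hℳmem_inf, hℳfip, hno, rfl⟩
    have := csInf_le (OrderBot.bddBelow _) hmem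
    rw [← pseudoIntersectionNumber] at this  -- may not work; adjust
    exact hcard.not_ge this
  obtain ⟨Ap, hApinf, hApae⟩ := hpsi
  set A' : Set (ℕ →₀ ℚ) := ι ⁻¹' Ap with hA'def
  -- some member of 𝒢
  have hemptyWC : IsWeaklyCompact (∅ : Set X) := by
    rw [IsWeaklyCompact, Set.image_empty]
    exact isCompact_empty
  obtain ⟨G₀, hG₀, -⟩ := h𝒢gen ∅ hemptyWC 1 one_pos
  have hBmem : ∀ (G : Set X), G ∈ 𝒢 → ∀ k N : ℕ,
      ι '' (A G k N) ∈ ℳ := by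
    intro G hG k N
    exact ⟨⟨⟨G, hG⟩, ⟨k⟩, ⟨N⟩⟩, rfl⟩
  have hALMOST : ∀ (G : Set X), G ∈ 𝒢 → ∀ k N : ℕ, (A' \ A G k N).Finite := by
    intro G hG k N
    have hfinB := hApae _ (hBmem G hG k N)
    refine Set.Finite.subset (hfinB.preimage (hι.injOn)) ?_
    rintro p ⟨hp1, hp2⟩
    refine ⟨hp1, fun hpB => ?_⟩
    obtain ⟨p', hp', hpp'⟩ := hpB
    exact hp2 (hι hpp' ▸ hp')
  have hA'inf : A'.Infinite := by
    have h1 := hApae _ (hBmem G₀ hG₀ 0 0)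
    have h2 : (Ap \ (Ap \ ι '' (A G₀ 0 0))).Infinite := hApinf.diff h1
    have h3 : (Ap \ (Ap \ ι '' (A G₀ 0 0))) ⊆ Set.range ι := by
      rintro x ⟨hx1, hx2⟩
      have : x ∈ ι '' (A G₀ 0 0) := by
        by_contra hc
        exact hx2 ⟨hx1, hc⟩
      exact Set.image_subset_range _ _ this
    refine Set.Infinite.mono ?_ (h2.preimage h3)
    intro p hp
    exact hp.1
  -- recursive selection of the block sequence
  have hstep : ∀ b : ℕ, ∃ p, p ∈ A' ∧ p ∈ A G₀ 0 b := by
    intro b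
    obtain ⟨p, hp1, hp2⟩ := (hA'inf.diff (hALMOST G₀ hG₀ 0 b)).nonempty
    refine ⟨p, hp1, ?_⟩
    by_contra hc
    exact hp2 ⟨hp1, hc⟩
  choose nxt hn1 hn2 using hstep
  set u : ℕ → (ℕ →₀ ℚ) :=
    fun n => Nat.rec (nxt 0) (fun _ pp => nxt ((pp.support.sup id) + 1)) n with hudef2
  have huS : ∀ n, u (n+1) = nxt ((u n).support.sup id + 1) := fun n => rfl
  have huA' : ∀ n, u n ∈ A' := by
    intro n
    cases n with
    | zero => exact hn1 0
    | succ n => rw [huS]; exact hn1 _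
  have huA : ∀ n, ∃ b, u n ∈ A G₀ 0 b := by
    intro n
    cases n with
    | zero => exact ⟨0, hn2 0⟩
    | succ n => exact ⟨_, by rw [huS]; exact hn2 _⟩
  have hu_pos : ∀ n j, 0 ≤ u n j := fun n j => (huA n).choose_spec.1 j
  have hu_sum : ∀ n, (∑ j ∈ (u n).support, u n j) = 1 := fun n => (huA n).choose_spec.2.1
  have hu_far : ∀ n, ∀ j ∈ (u (n+1)).support, (u n).support.sup id + 1 ≤ j := by
    intro n j hj
    have h1 : u (n+1) ∈ A G₀ 0 ((u n).support.sup id + 1) := by rw [huS]; exact hn2 _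
    exact h1.2.2.1 j hj
  have hsne : ∀ n, (u n).support.Nonempty := by
    intro n
    rcases Finset.eq_empty_or_nonempty (u n).support with he | hne
    · exfalso
      have := hu_sum n
      rw [he] at this
      simp at this
    · exact hne
  have hsep : ∀ n, ∀ m ∈ (u n).support, ∀ m' ∈ (u (n+1)).support, m < m' := by
    intro n m hm m' hm'
    have h1 : m ≤ (u n).support.sup id := Finset.le_sup (f := id) hm
    have h2 := hu_far n m' hm'
    omega
  have hord : ∀ n n', n < n' → ∀ m ∈ (u n).support, ∀ m' ∈ (u n').support, m < m' := by
    intro n n' hnn'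
    induction n' , hnn' using Nat.le_induction with
    | base => exact hsep n
    | succ n' hn' ih =>
      intro m hm m' hm'
      obtain ⟨m₀, hm₀⟩ := hsne n'
      exact lt_trans (ih m hm m₀ hm₀) (hsep n' m₀ hm₀ m' hm')
  have huinj : Function.Injective u := by
    have key : ∀ a b, a < b → u a ≠ u b := by
      intro a b hab heq
      obtain ⟨m, hm⟩ := hsne a
      have hm' : m ∈ (u b).support := by rw [← heq]; exact hm
      exact lt_irrefl m (hord a b hab m hm m hm')
    intro a b heq
    rcases lt_trichotomy a b with h1 | h1 | h1
    · exact absurd heq (key a b h1)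
    · exact h1
    · exact absurd heq.symm (key b a h1)
  have hev : ∀ (G : Set X), G ∈ 𝒢 → ∀ k N : ℕ, ∀ᶠ n in atTop, u n ∈ A G k N := by
    intro G hG k N
    have hfin : (u ⁻¹' (A' \ A G k N)).Finite :=
      (hALMOST G hG k N).preimage (huinj.injOn)
    have := hfin.eventually_cofinite_notMem
    rw [Nat.cofinite_eq_atTop] at this
    refine this.mono (fun n hn => ?_)
    by_contra hc
    exact hn ⟨huA' n, hc⟩
  -- the convex block sequence
  set a : ℕ → ℝ := fun m =>
    if h : ∃ n, m ∈ (u n).support then ((u h.choose) m : ℝ) else 0 with hadef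
  have ha_spec : ∀ n m, m ∈ (u n).support → a m = ((u n) m : ℝ) := by
    intro n m hm
    have hex : ∃ n', m ∈ (u n').support := ⟨n, hm⟩
    rw [hadef]
    simp only [dif_pos hex]
    have heq : hex.choose = n := by
      by_contra hne
      rcases lt_or_gt_of_ne hne with h1 | h1
      · exact lt_irrefl m (hord _ _ h1 m hex.choose_spec m hm)
      · exact lt_irrefl m (hord _ _ h1 m hm m hex.choose_spec)
    rw [heq]
  have ha_pos : ∀ m, 0 ≤ a m := by
    intro m
    rw [hadef]
    by_cases hm : ∃ n, m ∈ (u n).support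
    · simp only [dif_pos hm]
      exact_mod_cast hu_pos hm.choose m
    · simp only [dif_neg hm]; exact le_rfl
  have ha_sum : ∀ n, ∑ m ∈ (u n).support, a m = 1 := by
    intro n
    have : ∑ m ∈ (u n).support, a m = ∑ m ∈ (u n).support, ((u n) m : ℝ) :=
      Finset.sum_congr rfl (fun m hm => ha_spec n m hm)
    rw [this]
    exact_mod_cast congrArg (fun t : ℚ => (t : ℝ)) (hu_sum n)
  set y : ℕ → StrongDual ℝ X := fun n => ∑ m ∈ (u n).support, a m • f m with hydef
  refine ⟨y, g, ⟨fun n => (u n).support, a, hsne,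
    fun k m m' hm hm' => hsep k m hm m' hm', ha_pos, ha_sum, fun n => rfl⟩, ?_⟩
  -- Mackey convergence
  intro L hL ε hε
  have hC1 : (0:ℝ) < 3 * (C + 1) := by linarith
  obtain ⟨G, hG, hcover⟩ := h𝒢gen L hL (ε / (3 * (C + 1))) (by positivity)
  obtain ⟨k, hk⟩ := exists_nat_one_div_lt (show (0:ℝ) < ε/3 by positivity)
  filter_upwards [hev G hG k 0] with n hn
  intro x hx
  -- identity y n x - g x = Λ (u n) x
  have hyx : y n x - g x = Λ (u n) x := by
    have h1 : y n x = ∑ m ∈ (u n).support, a m * f m x := by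
      rw [hydef]
      simp [ContinuousLinearMap.sum_apply]
    have h2 : Λ (u n) x = ∑ m ∈ (u n).support, ((u n) m : ℝ) * (f m x - g x) := by
      rw [hΛapp]
      refine Finset.sum_congr rfl (fun m hm => ?_)
      rw [hf'def]
      simp [ContinuousLinearMap.sub_apply]
    rw [h2, h1]
    have h3 : ∑ m ∈ (u n).support, ((u n) m : ℝ) * (f m x - g x)
        = ∑ m ∈ (u n).support, ((u n) m : ℝ) * f m x
          - (∑ m ∈ (u n).support, ((u n) m : ℝ)) * g x := by
      rw [Finset.sum_mul, ← Finset.sum_sub_distrib]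
      exact Finset.sum_congr rfl (fun m _ => by ring)
    have h4 : (∑ m ∈ (u n).support, ((u n) m : ℝ)) = 1 := by
      exact_mod_cast congrArg (fun t : ℚ => (t : ℝ)) (hu_sum n)
    rw [h3, h4, one_mul]
    have h5 : ∑ m ∈ (u n).support, a m * f m x
        = ∑ m ∈ (u n).support, ((u n) m : ℝ) * f m x :=
      Finset.sum_congr rfl (fun m hm => by rw [ha_spec n m hm])
    rw [h5]
  rw [hyx]
  obtain ⟨z, hz, hxz⟩ := hcover x hx
  have hb1 : |Λ (u n) z| ≤ 1/(k+1) := hn.2.2.2 z hz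
  have hΛn : ‖Λ (u n)‖ ≤ C := hΛnorm (u n) hn.1 hn.2.1
  have hb2 : |Λ (u n) x - Λ (u n) z| ≤ C * (ε / (3 * (C + 1))) := by
    have he : Λ (u n) x - Λ (u n) z = Λ (u n) (x - z) := (map_sub _ _ _).symm
    rw [he]
    calc |Λ (u n) (x - z)| ≤ ‖Λ (u n)‖ * ‖x - z‖ := (Λ (u n)).le_opNorm _
      _ ≤ C * (ε / (3 * (C + 1))) := by
          refine mul_le_mul hΛn hxz (norm_nonneg _) hC0
  have hb3 : C * (ε / (3 * (C + 1))) ≤ ε / 3 := by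
    have h1 : C * (ε / (3 * (C + 1))) = (C / (C + 1)) * (ε / 3) := by
      rw [← mul_div_assoc, div_mul_div_comm]
      congr 1
      ring
    have h2 : C / (C + 1) ≤ 1 := by
      rw [div_le_one (by linarith)]
      linarith
    have h3 : (0:ℝ) ≤ ε / 3 := by positivity
    rw [h1]
    nlinarith
  calc |Λ (u n) x| ≤ |Λ (u n) z| + |Λ (u n) x - Λ (u n) z| := by
        have := abs_sub_abs_le_abs_sub (Λ (u n) x) (Λ (u n) z)
        have h6 := abs_add_le (Λ (u n) z) (Λ (u n) x - Λ (u n) z)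
        have h7 : Λ (u n) z + (Λ (u n) x - Λ (u n) z) = Λ (u n) x := by ring
        rw [h7] at h6
        exact h6
    _ ≤ 1/(k+1) + ε/3 := by linarith
    _ < ε/3 + ε/3 := by linarith
    _ < ε := by linarith
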